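/- For every integer n ≥ 3, there is no group isomorphism between the unitary group U(n,ℂ) and the general linear group GL(n,ℂ), i.e. U(n,ℂ) and GL(n,ℂ) are not isomorphic as abstract groups. -/

import Mathlib

open Polynomial Matrix

lemma mem_spectrum_iff_root {n : ℕ} (A : Matrix (Fin n) (Fin n) ℂ) (z : ℂ) :
    z ∈ spectrum ℂ A ↔ A.charpoly.IsRoot z := by
  rw [spectrum.mem_iff, Matrix.charpoly, IsRoot.def, ← Polynomial.coe_evalRingHom,
    RingHom.map_det]
  have hmap : (charmatrix A).map (evalRingHom z) = algebraMap ℂ _ z - A := by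
    ext i j
    by_cases h : i = j <;>
      simp [h, charmatrix_apply_eq, charmatrix_apply_ne, Matrix.algebraMap_matrix_apply,
        Matrix.one_apply]
  rw [RingHom.mapMatrix_apply, hmap]
  rw [Matrix.isUnit_iff_isUnit_det, isUnit_iff_ne_zero, not_not]

lemma exists_pow_eq_one_of_sq_stable {S : Set ℂ} (hfin : S.Finite) (h0 : (0:ℂ) ∉ S)
    (hsq : ∀ z ∈ S, z ^ 2 ∈ S) {z : ℂ} (hz : z ∈ S) : ∃ k : ℕ, 0 < k ∧ z ^ k = 1 := by
  have hz0 : z ≠ 0 := fun h => h0 (h ▸ hz)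
  have hpow : ∀ m : ℕ, z ^ (2 ^ m) ∈ S := by
    intro m; induction m with
    | zero => simpa using hz
    | succ m ih => rw [pow_succ, pow_mul]; exact hsq _ ih
  have hninj : ¬ Function.Injective (fun m : ℕ => z ^ (2 ^ m)) := by
    intro hinj
    exact (Set.infinite_of_injective_forall_mem hinj hpow) hfin
  rw [Function.not_injective_iff] at hninj
  obtain ⟨a, b, heq, hne⟩ := hninj
  rcases hne.lt_or_gt with h | h
  · refine ⟨2 ^ b - 2 ^ a, Nat.sub_pos_of_lt (Nat.pow_lt_pow_right (by norm_num) h), ?_⟩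
    have h2 : 2 ^ a ≤ 2 ^ b := Nat.pow_le_pow_right (by norm_num) h.le
    have : z ^ (2 ^ a) * z ^ (2 ^ b - 2 ^ a) = z ^ (2 ^ a) * 1 := by
      rw [mul_one, ← pow_add, Nat.add_sub_cancel' h2]; exact heq.symm
    exact mul_left_cancel₀ (pow_ne_zero _ hz0) this
  · refine ⟨2 ^ a - 2 ^ b, Nat.sub_pos_of_lt (Nat.pow_lt_pow_right (by norm_num) h), ?_⟩
    have h2 : 2 ^ b ≤ 2 ^ a := Nat.pow_le_pow_right (by norm_num) h.le
    have : z ^ (2 ^ b) * z ^ (2 ^ a - 2 ^ b) = z ^ (2 ^ b) * 1 := by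
      rw [mul_one, ← pow_add, Nat.add_sub_cancel' h2]; exact heq
    exact mul_left_cancel₀ (pow_ne_zero _ hz0) this

lemma unitary_eq_one_of_trace {n : ℕ} (M : Matrix (Fin n) (Fin n) ℂ)
    (hu : star M * M = 1) (ht : M.trace = n) : M = 1 := by
  set T : Matrix (Fin n) (Fin n) ℂ := M - 1 with hT
  have hTtr : T.trace = 0 := by
    simp [hT, Matrix.trace_sub, ht, Matrix.trace_one]
  have hexp : Tᴴ * T = -(Tᴴ + T) := by
    have : (Tᴴ + 1) * (T + 1) = 1 := by
      have hM : M = T + 1 := by rw [hT]; abel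
      have hMs : star M = Tᴴ + 1 := by
        rw [hM]; simp [Matrix.star_eq_conjTranspose, Matrix.conjTranspose_add]
      rw [← hM, ← hMs]; exact hu
    have := this
    rw [add_mul, mul_add, mul_add, mul_one, one_mul, one_mul] at this
    -- Tᴴ*T + Tᴴ + T + 1 = 1
    have h2 : Tᴴ * T + Tᴴ + T = 0 := by
      have h3 := congrArg (· - (1 : Matrix (Fin n) (Fin n) ℂ)) this
      have h4 : Tᴴ * T + Tᴴ + T = Tᴴ * T + Tᴴ + (T + 1) - 1 := by abel
      rw [h4, h3]; simp
    have : Tᴴ * T = -(Tᴴ + T) + 0 := by rw [← h2]; abel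
    simpa using this
  have htr0 : (Tᴴ * T).trace = 0 := by
    rw [hexp, Matrix.trace_neg, Matrix.trace_add, Matrix.trace_conjTranspose, hTtr]
    simp
  have hzero : T = 0 := by
    have hsum : ∑ j, ∑ i, ((Complex.normSq (T i j) : ℂ)) = 0 := by
      rw [← htr0]
      simp only [Matrix.trace, Matrix.diag, Matrix.mul_apply, Matrix.conjTranspose_apply]
      refine Finset.sum_congr rfl fun j _ => Finset.sum_congr rfl fun i _ => ?_
      rw [Complex.normSq_eq_conj_mul_self]; rfl
    have hsumR : ∑ j, ∑ i, Complex.normSq (T i j) = 0 := by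
      exact_mod_cast hsum.symm ▸ (by push_cast; rfl : ((∑ j, ∑ i, Complex.normSq (T i j) : ℝ) : ℂ) = ∑ j, ∑ i, ((Complex.normSq (T i j) : ℂ)))
    ext i j
    have h1 := (Finset.sum_eq_zero_iff_of_nonneg (fun j _ => Finset.sum_nonneg fun i _ => Complex.normSq_nonneg _)).mp hsumR j (Finset.mem_univ j)
    have h2 := (Finset.sum_eq_zero_iff_of_nonneg (fun i _ => Complex.normSq_nonneg _)).mp h1 i (Finset.mem_univ i)
    simpa using Complex.normSq_eq_zero.mp h2
  rw [← sub_eq_zero, ← hT, hzero]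

lemma unitary_pow_eq_one_of_conj_sq {n : ℕ} (G H : (Matrix (Fin n) (Fin n) ℂ)ˣ)
    (hrel : (H : Matrix (Fin n) (Fin n) ℂ) * (G : Matrix (Fin n) (Fin n) ℂ) * (↑H⁻¹ : Matrix (Fin n) (Fin n) ℂ) = (G : Matrix (Fin n) (Fin n) ℂ) ^ 2)
    (hGu : (G : Matrix (Fin n) (Fin n) ℂ) ∈ unitary (Matrix (Fin n) (Fin n) ℂ)) :
    ∃ N : ℕ, 0 < N ∧ (G : Matrix (Fin n) (Fin n) ℂ) ^ N = 1 := by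
  set A : Matrix (Fin n) (Fin n) ℂ := (G : Matrix (Fin n) (Fin n) ℂ) with hA
  set S : Set ℂ := spectrum ℂ A with hS
  have hfin : S.Finite := A.finite_spectrum
  have hconj : spectrum ℂ (A ^ 2) = S := by
    rw [← hrel]; exact spectrum.units_conjugate
  have hmap : spectrum ℂ (A ^ 2) = (· ^ 2) '' S :=
    spectrum.map_pow_of_pos A two_pos
  have hsq : ∀ z ∈ S, z ^ 2 ∈ S := by
    intro z hz
    rw [← hconj, hmap]
    exact ⟨z, hz, rfl⟩
  have h0 : (0 : ℂ) ∉ S := spectrum.zero_notMem_iff ℂ |>.mpr G.isUnit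
  -- choose exponents
  classical
  have hex : ∀ z : ℂ, ∃ k : ℕ, 0 < k ∧ (z ∈ S → z ^ k = 1) := by
    intro z
    by_cases hz : z ∈ S
    · obtain ⟨k, hk, hk1⟩ := exists_pow_eq_one_of_sq_stable hfin h0 hsq hz
      exact ⟨k, hk, fun _ => hk1⟩
    · exact ⟨1, one_pos, fun h => absurd h hz⟩
  choose k hkpos hk1 using hex
  set N : ℕ := ∏ z ∈ hfin.toFinset, k z with hN
  have hNpos : 0 < N := Finset.prod_pos fun z _ => hkpos z
  have hNz : ∀ z ∈ S, z ^ N = 1 := by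
    intro z hz
    obtain ⟨c, hc⟩ := Finset.dvd_prod_of_mem k (hfin.mem_toFinset.mpr hz)
    rw [hN, hc, pow_mul, hk1 z hz, one_pow]
  refine ⟨N, hNpos, ?_⟩
  -- spectrum of A ^ N is {1}
  have hspecN : spectrum ℂ (A ^ N) ⊆ {1} := by
    rw [spectrum.map_pow_of_pos A hNpos]
    rintro _ ⟨z, hz, rfl⟩
    exact hNz z hz
  -- trace of A ^ N equals n
  have hroots : (A ^ N).charpoly.roots = Multiset.replicate n 1 := by
    rw [Multiset.eq_replicate]
    constructor
    · rw [(Polynomial.splits_iff_card_roots).mp (IsAlgClosed.splits _),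
        Matrix.charpoly_natDegree_eq_dim, Fintype.card_fin]
    · intro b hb
      have : b ∈ spectrum ℂ (A ^ N) := by
        rw [mem_spectrum_iff_root]
        exact (Polynomial.mem_roots (Matrix.charpoly_monic _).ne_zero).mp hb
      exact hspecN this
  have htrace : (A ^ N).trace = n := by
    rw [Matrix.trace_eq_sum_roots_charpoly, hroots, Multiset.sum_replicate]
    simp
  have hANu : A ^ N ∈ unitary (Matrix (Fin n) (Fin n) ℂ) := pow_mem hGu N
  exact unitary_eq_one_of_trace (A ^ N) ((Unitary.mem_iff.mp hANu).1) htrace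

theorem unitary_not_iso_GL_as_groups (n : ℕ) (hn : 3 ≤ n) :
    IsEmpty (Matrix.unitaryGroup (Fin n) ℂ ≃* GL (Fin n) ℂ) := by
  constructor
  intro e
  classical
  set i0 : Fin n := ⟨0, by omega⟩
  set i1 : Fin n := ⟨1, by omega⟩
  have hne : i0 ≠ i1 := by simp [i0, i1, Fin.ext_iff]
  set E : Matrix (Fin n) (Fin n) ℂ := Matrix.single i0 i1 1 with hE
  have hE2 : E * E = 0 := by
    rw [hE, Matrix.single_mul_single_of_ne (c := (1:ℂ)) i0 i1 i0 (Ne.symm hne) 1]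
  have huinv : ((1 : Matrix (Fin n) (Fin n) ℂ) + E) * (1 - E) = 1 := by
    rw [mul_sub, mul_one, add_mul, one_mul, hE2]; abel
  have huinv' : ((1 : Matrix (Fin n) (Fin n) ℂ) - E) * (1 + E) = 1 := by
    rw [sub_mul, one_mul, mul_add, mul_one, hE2]; abel
  set U : GL (Fin n) ℂ := ⟨1 + E, 1 - E, huinv, huinv'⟩ with hU
  set d : Fin n → ℂ := fun i => if i = i0 then 2 else 1 with hd
  set dinv : Fin n → ℂ := fun i => if i = i0 then 2⁻¹ else 1 with hdinv
  have hdd : ∀ i, d i * dinv i = 1 := by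
    intro i; by_cases h : i = i0 <;> simp [hd, hdinv, h]
  have hdd' : ∀ i, dinv i * d i = 1 := by
    intro i; by_cases h : i = i0 <;> simp [hd, hdinv, h]
  set C : GL (Fin n) ℂ := ⟨Matrix.diagonal d, Matrix.diagonal dinv,
    by rw [Matrix.diagonal_mul_diagonal]; simp only [hdd]; exact Matrix.diagonal_one,
    by rw [Matrix.diagonal_mul_diagonal]; simp only [hdd']; exact Matrix.diagonal_one⟩ with hC
  -- key conjugation identity
  have hdE : Matrix.diagonal d * E = (2 : ℂ) • E := by
    ext i j
    rw [Matrix.diagonal_mul, Matrix.smul_apply]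
    by_cases h : i = i0
    · subst h; simp [hd]
    · have hz : E i j = 0 := by
        rw [hE]
        exact Matrix.single_apply_of_ne _ _ _ _ _ (fun hc => h hc.1.symm)
      rw [hz, smul_zero, mul_zero]
  have hEd : E * Matrix.diagonal dinv = E := by
    ext i j
    rw [Matrix.mul_diagonal]
    by_cases h : j = i1
    · subst h
      have : dinv i1 = 1 := by simp [hdinv, Ne.symm hne]
      rw [this, mul_one]
    · have hz : E i j = 0 := by
        rw [hE]
        exact Matrix.single_apply_of_ne _ _ _ _ _ (fun hc => h hc.2.symm)
      rw [hz, zero_mul]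
  have hddiag : Matrix.diagonal d * Matrix.diagonal dinv = 1 := by
    rw [Matrix.diagonal_mul_diagonal]; simp only [hdd]; exact Matrix.diagonal_one
  have hCUC : C * U * C⁻¹ = U ^ 2 := by
    apply Units.ext
    show Matrix.diagonal d * (1 + E) * Matrix.diagonal dinv = ((1 + E) ^ 2 : _)
    have hsq : ((1 : Matrix (Fin n) (Fin n) ℂ) + E) ^ 2 = 1 + (2 : ℂ) • E := by
      rw [sq, mul_add, mul_one, add_mul, one_mul, hE2, two_smul]; abel
    rw [hsq, mul_add, mul_one, add_mul, hdE, smul_mul_assoc, hEd, hddiag]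
  -- U has infinite order
  have hUpow : ∀ k : ℕ, ((U ^ k : GL (Fin n) ℂ) : Matrix (Fin n) (Fin n) ℂ)
      = 1 + (k : ℂ) • E := by
    intro k
    induction k with
    | zero => simp
    | succ k ih =>
      rw [pow_succ, Units.val_mul, ih]
      show _ = _
      have : ((U : GL (Fin n) ℂ) : Matrix (Fin n) (Fin n) ℂ) = 1 + E := rfl
      rw [this, mul_add, mul_one, add_mul, one_mul, smul_mul_assoc, hE2]
      push_cast
      rw [smul_zero]
      module
  have hUord : ∀ k : ℕ, 0 < k → U ^ k ≠ 1 := by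
    intro k hk h1
    have := congrArg (fun M : GL (Fin n) ℂ => ((M : Matrix (Fin n) (Fin n) ℂ)) i0 i1) h1
    simp only [hUpow k] at this
    rw [Matrix.add_apply, Matrix.smul_apply, Matrix.one_apply_ne hne] at this
    simp only [hE, Matrix.single_apply_same, smul_eq_mul, mul_one, zero_add,
      Units.val_one, Matrix.one_apply_ne hne] at this
    have hk0 : (k : ℂ) = 0 := by linear_combination this
    have : k = 0 := by exact_mod_cast hk0
    omega
  -- pull back through the isomorphism
  set g := e.symm U with hg
  set h := e.symm C with hh
  have hconj : h * g * h⁻¹ = g ^ 2 := by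
    rw [hg, hh, ← _root_.map_inv e.symm, ← _root_.map_mul, ← _root_.map_mul, ← _root_.map_pow, hCUC]
  set Gu := Unitary.toUnits g with hGu
  set Hu := Unitary.toUnits h with hHu
  have hrel : (Hu : Matrix (Fin n) (Fin n) ℂ) * (Gu : Matrix (Fin n) (Fin n) ℂ)
      * ((Hu⁻¹ : (Matrix (Fin n) (Fin n) ℂ)ˣ) : Matrix (Fin n) (Fin n) ℂ)
      = (Gu : Matrix (Fin n) (Fin n) ℂ) ^ 2 := by
    have h2 := congrArg (fun x => ((Unitary.toUnits x : (Matrix (Fin n) (Fin n) ℂ)ˣ)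
      : Matrix (Fin n) (Fin n) ℂ)) hconj
    have h3 : ((h : Matrix (Fin n) (Fin n) ℂ)) * g * star ((h : Matrix (Fin n) (Fin n) ℂ))
        = ((g : Matrix (Fin n) (Fin n) ℂ)) ^ 2 := by
      simpa [_root_.map_mul, _root_.map_inv, _root_.map_pow] using h2
    exact h3
  have hmem : (Gu : Matrix (Fin n) (Fin n) ℂ) ∈ unitary (Matrix (Fin n) (Fin n) ℂ) := g.2
  obtain ⟨N, hNpos, hpowN⟩ := unitary_pow_eq_one_of_conj_sq Gu Hu hrel hmem
  have hgN : g ^ N = 1 := by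
    apply Subtype.ext
    simpa [hGu] using hpowN
  have hUN : U ^ N = 1 := by
    calc U ^ N = e (e.symm (U ^ N)) := (e.apply_symm_apply _).symm
    _ = e ((e.symm U) ^ N) := by rw [map_pow]
    _ = e 1 := by rw [← hg, hgN]
    _ = 1 := map_one e
  exact hUord N hNpos hUN
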